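/- Let p_n denote the n-th prime, Q_r = ∑_{k=1}^r 1/p_k, and let M be the Meissel–Mertens constant. Let f : [1/2, ∞) → ℝ be positive, continuous and monotonically decreasing with ∫_{1/2}^∞ f(t) dt divergent. Then ∑_{r : p_r ≤ x} (1/p_r) · f(Q_r) is asymptotically equal to ∫_{1/2}^{ln ln x + M} f(t) dt as x → ∞, i.e. the ratio of the two quantities tends to 1. -/

import Mathlib

open Filter Finset MeasureTheory

private noncomputable def QQ (r : ℕ) : ℝ :=
  ∑ j ∈ Finset.range r, (1 : ℝ) / (Nat.nth Nat.Prime j : ℝ)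

private lemma nthp_prime (j : ℕ) : (Nat.nth Nat.Prime j).Prime :=
  Nat.nth_mem_of_infinite Nat.infinite_setOf_prime j

private lemma nthp_pos (j : ℕ) : 0 < (Nat.nth Nat.Prime j : ℝ) := by
  exact_mod_cast (nthp_prime j).pos

private lemma nthp_zero : Nat.nth Nat.Prime 0 = 2 := by
  have h2 : Nat.Prime 2 := Nat.prime_two
  have h := Nat.nth_count h2
  rwa [show Nat.count Nat.Prime 2 = 0 by decide] at h

private lemma nthp_ge (j : ℕ) : j + 2 ≤ Nat.nth Nat.Prime j := by
  induction j with
  | zero => simp [nthp_zero]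
  | succ n ih =>
      have h : Nat.nth Nat.Prime n < Nat.nth Nat.Prime (n + 1) :=
        Nat.nth_strictMono Nat.infinite_setOf_prime (Nat.lt_succ_self n)
      omega

private lemma QQ_succ (r : ℕ) : QQ (r + 1) = QQ r + 1 / (Nat.nth Nat.Prime r : ℝ) :=
  Finset.sum_range_succ _ r

private lemma QQ_one : QQ 1 = 1 / 2 := by
  simp [QQ, Finset.sum_range_one, nthp_zero]

private lemma QQ_mono : Monotone QQ := by
  apply monotone_nat_of_le_succ
  intro n
  rw [QQ_succ]
  have h := one_div_pos.mpr (nthp_pos n)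
  linarith

private lemma QQ_half {r : ℕ} (hr : 1 ≤ r) : 1 / 2 ≤ QQ r := QQ_one ▸ QQ_mono hr

private lemma primesum (m : ℕ) :
    ∑ q ∈ (Finset.Iic m).filter Nat.Prime, (1 : ℝ) / (q : ℝ)
      = QQ (Nat.count Nat.Prime (m + 1)) := by
  have hInf : (setOf Nat.Prime).Infinite := Nat.infinite_setOf_prime
  rw [QQ]
  refine Finset.sum_nbij' (fun q => Nat.count Nat.Prime q) (fun j => Nat.nth Nat.Prime j)
    ?_ ?_ ?_ ?_ ?_
  · intro q hq
    simp only [Finset.mem_filter, Finset.mem_Iic] at hq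
    simp only [Finset.mem_range]
    have h1 : Nat.count Nat.Prime q + 1 = Nat.count Nat.Prime (q + 1) := by
      rw [Nat.count_succ, if_pos hq.2]
    have h2 : Nat.count Nat.Prime (q + 1) ≤ Nat.count Nat.Prime (m + 1) :=
      Nat.count_monotone _ (by omega)
    omega
  · intro j hj
    simp only [Finset.mem_range] at hj
    simp only [Finset.mem_filter, Finset.mem_Iic]
    have h : Nat.nth Nat.Prime j < m + 1 := (Nat.lt_nth_iff_count_lt hInf).mp hj
    exact ⟨by omega, nthp_prime j⟩
  · intro q hq
    simp only [Finset.mem_filter, Finset.mem_Iic] at hq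
    exact Nat.nth_count hq.2
  · intro j _
    exact Nat.count_nth_of_infinite hInf j
  · intro q hq
    simp only [Finset.mem_filter, Finset.mem_Iic] at hq
    rw [Nat.nth_count hq.2]

/-- With `p n` the `n`-th prime, `Q r = ∑_{k=1}^r 1/p k`, `M` the
Meissel–Mertens constant, and `f` positive continuous monotonically decreasing on
`[1/2, ∞)` with divergent integral,
`∑_{r : p r ≤ x} (1/p r) * f (Q r) ~ ∫_{1/2}^{ln ln x + M} f(t) dt` as `x → ∞`. -/
theorem sum_recip_prime_f_asymp_integral
    (p : ℕ → ℕ) (hp : ∀ n, p n = Nat.nth Nat.Prime (n - 1))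
    (Q : ℕ → ℝ) (hQ : ∀ r, Q r = ∑ k ∈ Finset.Icc 1 r, (1 : ℝ) / (p k : ℝ))
    (M : ℝ)
    (hM : Tendsto (fun x : ℝ =>
        (∑ q ∈ (Finset.Iic ⌊x⌋₊).filter Nat.Prime, (1 : ℝ) / (q : ℝ)) -
          Real.log (Real.log x)) atTop (nhds M))
    (f : ℝ → ℝ)
    (hfpos : ∀ t : ℝ, (1:ℝ)/2 ≤ t → 0 < f t)
    (hfcont : ContinuousOn f (Set.Ici ((1:ℝ)/2)))
    (hfdec : AntitoneOn f (Set.Ici ((1:ℝ)/2)))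
    (hfint : Tendsto (fun y : ℝ => ∫ t in ((1:ℝ)/2)..y, f t) atTop atTop) :
    Tendsto (fun x : ℝ =>
        (∑ r ∈ (Finset.Icc 1 ⌊x⌋₊).filter (fun r => (p r : ℝ) ≤ x),
            (1 / (p r : ℝ)) * f (Q r)) /
          (∫ t in ((1:ℝ)/2)..(Real.log (Real.log x) + M), f t))
      atTop (nhds 1) := by
  have hInf : (setOf Nat.Prime).Infinite := Nat.infinite_setOf_prime
  set N : ℝ → ℕ := fun x => Nat.count Nat.Prime (⌊x⌋₊ + 1) with hN
  set T : ℕ → ℝ := fun j => (1 / (Nat.nth Nat.Prime j : ℝ)) * f (QQ (j + 1)) with hT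
  set S : ℝ → ℝ := fun x =>
    ∑ r ∈ (Finset.Icc 1 ⌊x⌋₊).filter (fun r => (p r : ℝ) ≤ x),
      (1 / (p r : ℝ)) * f (Q r) with hS
  set L : ℝ → ℝ := fun x => Real.log (Real.log x) + M with hL
  set D : ℝ → ℝ := fun x => ∫ t in ((1:ℝ)/2)..(L x), f t with hD
  -- Q agrees with QQ
  have hQeq : ∀ r, Q r = QQ r := by
    intro r
    rw [hQ, QQ, ← Finset.Ico_add_one_right_eq_Icc, Finset.sum_Ico_eq_sum_range]
    try simp only [Nat.add_sub_cancel]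
    refine Finset.sum_congr rfl fun i _ => ?_
    rw [hp, show 1 + i - 1 = i from by omega]
  -- the index set
  have hset : ∀ x : ℝ, 0 ≤ x →
      (Finset.Icc 1 ⌊x⌋₊).filter (fun r => (p r : ℝ) ≤ x) = Finset.Icc 1 (N x) := by
    intro x hx
    ext r
    simp only [Finset.mem_filter, Finset.mem_Icc]
    constructor
    · rintro ⟨⟨h1, _⟩, h3⟩
      refine ⟨h1, ?_⟩
      have hfl : p r ≤ ⌊x⌋₊ := Nat.le_floor h3
      rw [hp] at hfl
      have hc : r - 1 < Nat.count Nat.Prime (⌊x⌋₊ + 1) :=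
        (Nat.lt_nth_iff_count_lt hInf).mpr (Nat.lt_succ_of_le hfl)
      show r ≤ Nat.count Nat.Prime (⌊x⌋₊ + 1)
      omega
    · rintro ⟨h1, h2⟩
      have h2' : r ≤ Nat.count Nat.Prime (⌊x⌋₊ + 1) := h2
      have hlt : Nat.nth Nat.Prime (r - 1) < ⌊x⌋₊ + 1 :=
        (Nat.lt_nth_iff_count_lt hInf).mp (by omega)
      have hge := nthp_ge (r - 1)
      have hr : r ≤ ⌊x⌋₊ := by omega
      have hple : p r ≤ ⌊x⌋₊ := by rw [hp]; omega
      refine ⟨⟨h1, hr⟩, ?_⟩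
      calc (p r : ℝ) ≤ (⌊x⌋₊ : ℝ) := by exact_mod_cast hple
        _ ≤ x := Nat.floor_le hx
  -- the sum as a sum of T's
  have hsum : ∀ x : ℝ, 0 ≤ x → S x = ∑ j ∈ Finset.range (N x), T j := by
    intro x hx
    simp only [hS]
    rw [hset x hx, ← Finset.Ico_add_one_right_eq_Icc, Finset.sum_Ico_eq_sum_range]
    try simp only [Nat.add_sub_cancel]
    refine Finset.sum_congr rfl fun i _ => ?_
    rw [hT, hQeq, hp]
    have h1 : 1 + i - 1 = i := by omega
    rw [h1, show 1 + i = i + 1 by omega]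
  -- basic properties of f
  have hf0 : ∀ t : ℝ, 1/2 ≤ t → 0 ≤ f t := fun t ht => (hfpos t ht).le
  have hIntv : ∀ a b : ℝ, 1/2 ≤ a → 1/2 ≤ b → IntervalIntegrable f volume a b := by
    intro a b ha hb
    refine (hfcont.mono ?_).intervalIntegrable
    intro t ht
    exact le_trans (le_min ha hb) ht.1
  have hintmono : ∀ a b : ℝ, 1/2 ≤ a → a ≤ b →
      (∫ t in ((1:ℝ)/2)..a, f t) ≤ ∫ t in ((1:ℝ)/2)..b, f t := by
    intro a b ha hab
    have hb : (1:ℝ)/2 ≤ b := ha.trans hab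
    rw [← intervalIntegral.integral_add_adjacent_intervals (hIntv _ _ le_rfl ha)
      (hIntv _ _ ha hb)]
    have h0 : 0 ≤ ∫ t in a..b, f t :=
      intervalIntegral.integral_nonneg hab (fun u hu => hf0 u (ha.trans hu.1))
    linarith
  -- per-term upper bound
  have upper_per : ∀ j : ℕ, 1 ≤ j → T j ≤ ∫ t in (QQ j)..(QQ (j+1)), f t := by
    intro j hj
    have hj2 : (1:ℝ)/2 ≤ QQ j := QQ_half hj
    have hle : QQ j ≤ QQ (j+1) := QQ_mono (Nat.le_succ j)
    have hj3 : (1:ℝ)/2 ≤ QQ (j+1) := hj2.trans hle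
    have hconst : (∫ _t in (QQ j)..(QQ (j+1)), f (QQ (j+1))) =
        (QQ (j+1) - QQ j) * f (QQ (j+1)) := by
      rw [intervalIntegral.integral_const, smul_eq_mul]
    have hTj : T j = (QQ (j+1) - QQ j) * f (QQ (j+1)) := by
      show (1 / (Nat.nth Nat.Prime j : ℝ)) * f (QQ (j + 1)) = _
      rw [QQ_succ]; ring
    rw [hTj, ← hconst]
    refine intervalIntegral.integral_mono_on hle intervalIntegrable_const
      (hIntv _ _ hj2 hj3) ?_
    intro t ht
    exact hfdec (hj2.trans ht.1) hj3 ht.2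
  -- per-term lower bound
  have lower_per : ∀ j : ℕ, (∫ t in (QQ (j+1))..(QQ (j+2)), f t) ≤ T j := by
    intro j
    have hj2 : (1:ℝ)/2 ≤ QQ (j+1) := QQ_half (Nat.le_add_left 1 j)
    have hle : QQ (j+1) ≤ QQ (j+2) := QQ_mono (Nat.le_succ _)
    have hj3 : (1:ℝ)/2 ≤ QQ (j+2) := hj2.trans hle
    have hconst : (∫ _t in (QQ (j+1))..(QQ (j+2)), f (QQ (j+1))) =
        (QQ (j+2) - QQ (j+1)) * f (QQ (j+1)) := by
      rw [intervalIntegral.integral_const, smul_eq_mul]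
    have step1 : (∫ t in (QQ (j+1))..(QQ (j+2)), f t) ≤
        (QQ (j+2) - QQ (j+1)) * f (QQ (j+1)) := by
      rw [← hconst]
      refine intervalIntegral.integral_mono_on hle (hIntv _ _ hj2 hj3)
        intervalIntegrable_const ?_
      intro t ht
      exact hfdec hj2 (hj2.trans ht.1) ht.1
    have hdiff : QQ (j+2) - QQ (j+1) = 1 / (Nat.nth Nat.Prime (j+1) : ℝ) := by
      rw [show j+2 = (j+1)+1 from rfl, QQ_succ]; ring
    have hmono : (1 : ℝ) / (Nat.nth Nat.Prime (j+1) : ℝ) ≤ 1 / (Nat.nth Nat.Prime j : ℝ) := by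
      apply one_div_le_one_div_of_le (nthp_pos j)
      exact_mod_cast (Nat.nth_strictMono hInf (Nat.lt_succ_self j)).le
    have hfnn : 0 ≤ f (QQ (j+1)) := hf0 _ hj2
    calc (∫ t in (QQ (j+1))..(QQ (j+2)), f t)
        ≤ (QQ (j+2) - QQ (j+1)) * f (QQ (j+1)) := step1
      _ = (1 / (Nat.nth Nat.Prime (j+1) : ℝ)) * f (QQ (j+1)) := by rw [hdiff]
      _ ≤ (1 / (Nat.nth Nat.Prime j : ℝ)) * f (QQ (j+1)) :=
          mul_le_mul_of_nonneg_right hmono hfnn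
      _ = T j := rfl
  -- telescoping
  have telescope : ∀ n : ℕ,
      (∑ j ∈ Finset.range n, ∫ t in (QQ (j+1))..(QQ (j+2)), f t)
        = ∫ t in ((1:ℝ)/2)..(QQ (n+1)), f t := by
    intro n
    have h := intervalIntegral.sum_integral_adjacent_intervals
      (a := fun k => QQ (k+1)) (μ := volume) (f := f) (n := n) ?_
    · rw [h, QQ_one]
    · intro k _
      exact hIntv _ _ (QQ_half (Nat.le_add_left 1 k)) (QQ_half (Nat.le_add_left 1 (k+1)))
  -- sum bounds
  have lower_sum : ∀ n : ℕ, 1 ≤ n →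
      (∫ t in ((1:ℝ)/2)..(QQ n), f t) ≤ ∑ j ∈ Finset.range n, T j := by
    intro n hn
    calc (∫ t in ((1:ℝ)/2)..(QQ n), f t)
        ≤ ∫ t in ((1:ℝ)/2)..(QQ (n+1)), f t :=
          hintmono _ _ (QQ_half hn) (QQ_mono (Nat.le_succ n))
      _ = ∑ j ∈ Finset.range n, ∫ t in (QQ (j+1))..(QQ (j+2)), f t := (telescope n).symm
      _ ≤ ∑ j ∈ Finset.range n, T j := Finset.sum_le_sum fun j _ => lower_per j
  have upper_sum : ∀ n : ℕ, 1 ≤ n →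
      (∑ j ∈ Finset.range n, T j) ≤ (1/2) * f (1/2) + ∫ t in ((1:ℝ)/2)..(QQ n), f t := by
    intro n hn
    obtain ⟨m, rfl⟩ : ∃ m, n = m + 1 := ⟨n - 1, by omega⟩
    rw [Finset.sum_range_succ']
    have hT0 : T 0 = (1/2) * f (1/2) := by
      show (1 / (Nat.nth Nat.Prime 0 : ℝ)) * f (QQ (0 + 1)) = _
      rw [QQ_one, nthp_zero]; norm_num
    have hrest : (∑ i ∈ Finset.range m, T (i + 1))
        ≤ ∫ t in ((1:ℝ)/2)..(QQ (m+1)), f t := by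
      calc (∑ i ∈ Finset.range m, T (i + 1))
          ≤ ∑ i ∈ Finset.range m, ∫ t in (QQ (i+1))..(QQ (i+2)), f t :=
            Finset.sum_le_sum fun i _ => upper_per (i+1) (Nat.le_add_left 1 i)
        _ = ∫ t in ((1:ℝ)/2)..(QQ (m+1)), f t := telescope m
    rw [hT0]
    linarith
  -- limit machinery
  have hLtop : Tendsto L atTop atTop := by
    rw [hL]
    exact tendsto_atTop_add_const_right atTop M
      (Real.tendsto_log_atTop.comp Real.tendsto_log_atTop)
  have hDtop : Tendsto D atTop atTop := hfint.comp hLtop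
  have hEL : Tendsto (fun x => QQ (N x) - L x) atTop (nhds 0) := by
    have h1 : Tendsto (fun x : ℝ => QQ (N x) - Real.log (Real.log x)) atTop (nhds M) := by
      refine hM.congr fun x => ?_
      rw [primesum]
    have h2 := h1.sub_const M
    rw [sub_self] at h2
    refine h2.congr fun x => ?_
    rw [hL]; ring
  -- eventual bound |S - D| ≤ C'
  have hC : 0 < f (1/2) := hfpos _ le_rfl
  have heps : ∀ᶠ x : ℝ in atTop, |QQ (N x) - L x| ≤ 1 := by
    have h1 : ∀ᶠ y : ℝ in nhds 0, |y| ≤ 1 := by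
      filter_upwards [Metric.closedBall_mem_nhds (0:ℝ) one_pos] with y hy
      simpa [Real.dist_eq] using hy
    exact hEL.eventually h1
  have hLhalf : ∀ᶠ x : ℝ in atTop, (1:ℝ)/2 ≤ L x := hLtop.eventually_ge_atTop _
  have hN1 : ∀ᶠ x : ℝ in atTop, 1 ≤ N x := by
    filter_upwards [eventually_ge_atTop (2:ℝ)] with x hx
    have h2 : 2 ≤ ⌊x⌋₊ := Nat.le_floor (by exact_mod_cast hx)
    have h3 : Nat.count Nat.Prime 3 ≤ Nat.count Nat.Prime (⌊x⌋₊ + 1) :=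
      Nat.count_monotone _ (by omega)
    rw [show Nat.count Nat.Prime 3 = 1 by decide] at h3
    show 1 ≤ Nat.count Nat.Prime (⌊x⌋₊ + 1)
    omega
  have hbound : ∀ᶠ x : ℝ in atTop,
      |S x - D x| ≤ (1/2) * f (1/2) + f (1/2) := by
    filter_upwards [eventually_ge_atTop (2:ℝ), hLhalf, heps, hN1] with x hx2 hLh he hN1x
    have hx0 : (0:ℝ) ≤ x := by linarith
    have hSx := hsum x hx0
    have hEhalf : (1:ℝ)/2 ≤ QQ (N x) := QQ_half hN1x
    set I : ℝ := ∫ t in ((1:ℝ)/2)..(QQ (N x)), f t with hI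
    have hlow : I ≤ S x := by rw [hSx]; exact lower_sum _ hN1x
    have hup : S x ≤ (1/2) * f (1/2) + I := by rw [hSx]; exact upper_sum _ hN1x
    have hsplit : D x + (∫ t in (L x)..(QQ (N x)), f t) = I := by
      exact intervalIntegral.integral_add_adjacent_intervals
        (hIntv _ _ le_rfl hLh) (hIntv _ _ hLh hEhalf)
    have htail : |∫ t in (L x)..(QQ (N x)), f t| ≤ f (1/2) := by
      have hb : ∀ t ∈ Set.uIoc (L x) (QQ (N x)), ‖f t‖ ≤ f (1/2) := by
        intro t ht
        have hth : (1:ℝ)/2 ≤ t := le_trans (le_min hLh hEhalf) ht.1.le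
        rw [Real.norm_eq_abs, abs_of_nonneg (hf0 t hth)]
        exact hfdec (Set.mem_Ici.mpr (le_refl ((1:ℝ)/2))) hth hth
      have h := intervalIntegral.norm_integral_le_of_norm_le_const hb
      rw [Real.norm_eq_abs] at h
      calc |∫ t in (L x)..(QQ (N x)), f t| ≤ f (1/2) * |QQ (N x) - L x| := h
        _ ≤ f (1/2) * 1 := mul_le_mul_of_nonneg_left he hC.le
        _ = f (1/2) := mul_one _
    have habs1 : |S x - I| ≤ (1/2) * f (1/2) :=
      abs_le.mpr ⟨by linarith, by linarith⟩
    have habs2 : |I - D x| ≤ f (1/2) := by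
      have : I - D x = ∫ t in (L x)..(QQ (N x)), f t := by linarith
      rw [this]; exact htail
    calc |S x - D x| ≤ |S x - I| + |I - D x| := abs_sub_le _ _ _
      _ ≤ (1/2) * f (1/2) + f (1/2) := add_le_add habs1 habs2
  -- conclude
  have hDpos : ∀ᶠ x : ℝ in atTop, (1:ℝ) ≤ D x := hDtop.eventually_ge_atTop 1
  have h0 : Tendsto (fun x => (S x - D x) / D x) atTop (nhds 0) := by
    refine squeeze_zero_norm' ?_ (Tendsto.div_atTop
      (tendsto_const_nhds (x := (1/2) * f (1/2) + f (1/2))) hDtop)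
    filter_upwards [hbound, hDpos] with x hb hd
    rw [Real.norm_eq_abs, abs_div, abs_of_nonneg (by linarith : (0:ℝ) ≤ D x)]
    gcongr
    try linarith
  have h1 : Tendsto (fun x => (S x - D x) / D x + 1) atTop (nhds 1) := by
    have h := h0.add (tendsto_const_nhds (x := (1:ℝ)))
    simpa using h
  have heq : (fun x => (S x - D x) / D x + 1) =ᶠ[atTop] fun x => S x / D x := by
    filter_upwards [hDpos] with x hd
    have hD0 : D x ≠ 0 := by linarith
    field_simp
    ring
  exact Filter.Tendsto.congr' heq h1
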